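/- The apolar algebra of the monomial x·y ∈ ℂ[x,y] is isomorphic to ℂ[u,v]/(u², v²), which is isomorphic to ℂ[x]/(x²) ⊗_ℂ ℂ[x]/(x²), and its multiplication tensor is the Coppersmith–Winograd tensor T_{CW,2}. -/

import Mathlib

open MvPolynomial TensorProduct

/-- The action of `g` on `f` as a constant-coefficient differential operator. -/
noncomputable def diffOp {σ : Type*} [DecidableEq σ]
    (g f : MvPolynomial σ ℂ) : MvPolynomial σ ℂ :=
  ∑ d ∈ g.support, ∑ e ∈ f.support,
    (g.coeff d * f.coeff e *
        ∏ i ∈ d.support, ((e i).descFactorial (d i) : ℂ))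
      • monomial (e - d) (1 : ℂ)

/-- The apolar ideal `f^⊥`. -/
noncomputable def apolarIdeal {σ : Type*} [DecidableEq σ]
    (f : MvPolynomial σ ℂ) : Ideal (MvPolynomial σ ℂ) :=
  Ideal.span {g | diffOp g f = 0}

/-- The apolar algebra of `f`. -/
noncomputable abbrev apolarAlgebra {σ : Type*} [DecidableEq σ]
    (f : MvPolynomial σ ℂ) := MvPolynomial σ ℂ ⧸ apolarIdeal f

/-- The algebra ℂ[x]/(x²). -/
noncomputable abbrev dualNumbers := Polynomial ℂ ⧸
  Ideal.span ({Polynomial.X ^ 2} : Set (Polynomial ℂ))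

/-- The 4-dimensional algebra whose multiplication tensor is T_{CW,2}: generated by
a₁ = X 0, a₂ = X 1 with a₁² = a₂² (= a₃), a₁a₂ = 0, a₁³ = 0 (hence all products of
a₁, a₂, a₃ other than a₁² = a₂² = a₃ vanish). -/
noncomputable abbrev CW2Algebra := MvPolynomial (Fin 2) ℂ ⧸
  Ideal.span ({X 0 ^ 2 - X 1 ^ 2, X 0 * X 1, X 0 ^ 3} : Set (MvPolynomial (Fin 2) ℂ))

/-- The apolar algebra of x·y is isomorphic to ℂ[u,v]/(u²,v²), which is isomorphic
to ℂ[x]/(x²) ⊗_ℂ ℂ[x]/(x²); and its multiplication tensor is the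
Coppersmith–Winograd tensor T_{CW,2}, i.e. it is isomorphic to the algebra
corresponding to T_{CW,2}. -/
noncomputable abbrev E2 : Fin 2 →₀ ℕ := Finsupp.single 0 1 + Finsupp.single 1 1

lemma E2_apply (i : Fin 2) : E2 i = 1 := by
  fin_cases i <;> simp [E2, Finsupp.single_apply]

lemma XX_eq : (X 0 * X 1 : MvPolynomial (Fin 2) ℂ) = monomial E2 1 := by
  rw [X, X, monomial_mul, mul_one]

lemma coeff_diffOp (g : MvPolynomial (Fin 2) ℂ) (m : Fin 2 →₀ ℕ) (hm : m ≤ E2) :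
    coeff m (diffOp g (X 0 * X 1)) = coeff (E2 - m) g := by
  rw [XX_eq]
  unfold diffOp
  rw [support_monomial, if_neg one_ne_zero]
  simp only [Finset.sum_singleton, coeff_monomial, if_pos rfl, mul_one]
  rw [coeff_sum]
  rw [Finset.sum_eq_single (E2 - m)]
  · by_cases h : E2 - m ∈ g.support
    · have h1 : E2 - (E2 - m) = m := tsub_tsub_cancel_of_le hm
      have h2 : ∀ i ∈ (E2 - m).support,
          ((E2 i).descFactorial ((E2 - m) i) : ℂ) = 1 := by
        intro i _
        have : (E2 - m) i ≤ 1 := by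
          have := E2_apply i
          simp only [Finsupp.tsub_apply]
          omega
        rw [E2_apply i]
        interval_cases h : ((E2 - m) i) <;> simp [h]
      rw [coeff_smul, Finset.prod_congr rfl h2]
      simp [h1]
    · rw [notMem_support_iff.mp h]
      simp
  · intro b _ hb
    rw [coeff_smul, coeff_monomial]
    by_cases h : E2 - b = m
    · have : ∃ i, E2 i < b i := by
        by_contra hc
        push_neg at hc
        apply hb
        ext i
        have h' : (E2 - b) i = m i := by rw [h]
        simp only [Finsupp.tsub_apply] at h' ⊢
        have := hc i
        omega
      obtain ⟨i, hi⟩ := this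
      have hmem : i ∈ b.support := by
        rw [Finsupp.mem_support_iff]
        omega
      have : (∏ i ∈ b.support, ((E2 i).descFactorial (b i) : ℂ)) = 0 := by
        apply Finset.prod_eq_zero hmem
        rw [Nat.descFactorial_eq_zero_iff_lt.mpr hi]
        simp
      rw [this]
      simp
    · rw [if_neg h]; simp
  · intro h
    rw [notMem_support_iff.mp h]
    simp

lemma diffOp_X_sq (i : Fin 2) : diffOp ((X i : MvPolynomial (Fin 2) ℂ) ^ 2) (X 0 * X 1) = 0 := by
  rw [XX_eq]
  unfold diffOp
  rw [X_pow_eq_monomial, support_monomial, if_neg one_ne_zero,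
    support_monomial, if_neg one_ne_zero]
  rw [Finset.sum_singleton, Finset.sum_singleton]
  rw [Finsupp.support_single_ne_zero _ (by norm_num : (2:ℕ) ≠ 0)]
  rw [Finset.prod_singleton, Finsupp.single_apply, if_pos rfl, E2_apply i]
  norm_num

lemma apolar_eq : apolarIdeal (X 0 * X 1 : MvPolynomial (Fin 2) ℂ)
    = Ideal.span ({X 0 ^ 2, X 1 ^ 2} : Set (MvPolynomial (Fin 2) ℂ)) := by
  apply le_antisymm
  · rw [apolarIdeal, Ideal.span_le]
    intro g hg
    simp only [Set.mem_setOf_eq] at hg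
    have hcoeff : ∀ d : Fin 2 →₀ ℕ, d ≤ E2 → coeff d g = 0 := by
      intro d hd
      have h1 := coeff_diffOp g (E2 - d) tsub_le_self
      rw [hg, tsub_tsub_cancel_of_le hd] at h1
      rw [coeff_zero] at h1; exact h1.symm
    have : g = ∑ m ∈ g.support, monomial m (coeff m g) := (as_sum g)
    rw [this]
    apply Ideal.sum_mem
    intro m _
    by_cases hle : m ≤ E2
    · rw [hcoeff m hle, monomial_zero]
      exact zero_mem _
    · have : ∃ i, 2 ≤ m i := by
        by_contra hc
        push_neg at hc
        exact hle (Finsupp.le_def.mpr fun i => by have := hc i; rw [E2_apply i]; omega)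
      obtain ⟨i, hi⟩ := this
      have hdecomp : monomial m (coeff m g)
          = (X i : MvPolynomial (Fin 2) ℂ) ^ 2 * monomial (m - Finsupp.single i 2) (coeff m g) := by
        have hm : Finsupp.single i 2 + (m - Finsupp.single i 2) = m := by
          ext j
          simp only [Finsupp.add_apply, Finsupp.tsub_apply, Finsupp.single_apply]
          by_cases hj : i = j
          · subst hj; simp; omega
          · simp [hj]
        rw [X_pow_eq_monomial, monomial_mul, one_mul, hm]
      rw [hdecomp]
      apply Ideal.mul_mem_right
      apply Ideal.subset_span
      fin_cases i
      · exact Set.mem_insert _ _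
      · exact Set.mem_insert_iff.mpr (Or.inr rfl)
  · rw [Ideal.span_le]
    rintro g (rfl | rfl)
    · exact Ideal.subset_span (diffOp_X_sq 0)
    · exact Ideal.subset_span (diffOp_X_sq 1)

noncomputable abbrev I2 : Ideal (MvPolynomial (Fin 2) ℂ) :=
  Ideal.span ({X 0 ^ 2, X 1 ^ 2} : Set (MvPolynomial (Fin 2) ℂ))

noncomputable abbrev Q2 := MvPolynomial (Fin 2) ℂ ⧸ I2

noncomputable abbrev ID : Ideal (Polynomial ℂ) := Ideal.span {Polynomial.X ^ 2}

lemma hxD : (Ideal.Quotient.mk ID Polynomial.X) ^ 2 = 0 := by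
  rw [← map_pow, Ideal.Quotient.eq_zero_iff_mem]
  exact Ideal.subset_span rfl

lemma hx0 : (Ideal.Quotient.mk I2 (X 0)) ^ 2 = 0 := by
  rw [← map_pow, Ideal.Quotient.eq_zero_iff_mem]
  exact Ideal.subset_span (Set.mem_insert _ _)

lemma hx1 : (Ideal.Quotient.mk I2 (X 1)) ^ 2 = 0 := by
  rw [← map_pow, Ideal.Quotient.eq_zero_iff_mem]
  exact Ideal.subset_span (Set.mem_insert_iff.mpr (Or.inr rfl))

noncomputable def phi0 : MvPolynomial (Fin 2) ℂ →ₐ[ℂ] dualNumbers ⊗[ℂ] dualNumbers :=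
  aeval (R := ℂ) (![(Ideal.Quotient.mk ID Polynomial.X) ⊗ₜ[ℂ] (1 : dualNumbers),
    (1 : dualNumbers) ⊗ₜ[ℂ] (Ideal.Quotient.mk ID Polynomial.X)] :
      Fin 2 → dualNumbers ⊗[ℂ] dualNumbers)

noncomputable def phi2 : Q2 →ₐ[ℂ] dualNumbers ⊗[ℂ] dualNumbers :=
  Ideal.Quotient.liftₐ I2 phi0 (by
    have hle : I2 ≤ RingHom.ker phi0.toRingHom := by
      rw [Ideal.span_le]
      rintro g (rfl | rfl) <;>
        (simp only [SetLike.mem_coe, RingHom.mem_ker]; rw [RingHom.map_pow]; simp [phi0, Algebra.TensorProduct.tmul_pow, hxD])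
    intro a ha
    exact RingHom.mem_ker.mp (hle ha))

noncomputable def psil : dualNumbers →ₐ[ℂ] Q2 :=
  Ideal.Quotient.liftₐ ID (Polynomial.aeval (Ideal.Quotient.mk I2 (X 0))) (by
    have hle : ID ≤ RingHom.ker (Polynomial.aeval (R := ℂ) (Ideal.Quotient.mk I2 (X 0))).toRingHom := by
      rw [Ideal.span_le]
      rintro g rfl
      simp [RingHom.mem_ker, hx0]
    intro a ha
    exact RingHom.mem_ker.mp (hle ha))

noncomputable def psir : dualNumbers →ₐ[ℂ] Q2 :=
  Ideal.Quotient.liftₐ ID (Polynomial.aeval (Ideal.Quotient.mk I2 (X 1))) (by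
    have hle : ID ≤ RingHom.ker (Polynomial.aeval (R := ℂ) (Ideal.Quotient.mk I2 (X 1))).toRingHom := by
      rw [Ideal.span_le]
      rintro g rfl
      simp [RingHom.mem_ker, hx1]
    intro a ha
    exact RingHom.mem_ker.mp (hle ha))

noncomputable def psi2 : dualNumbers ⊗[ℂ] dualNumbers →ₐ[ℂ] Q2 :=
  Algebra.TensorProduct.lift psil psir fun _ _ => Commute.all _ _

noncomputable def iso2 : Q2 ≃ₐ[ℂ] dualNumbers ⊗[ℂ] dualNumbers := by
  refine AlgEquiv.ofAlgHom phi2 psi2 ?_ ?_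
  · apply Algebra.TensorProduct.ext <;>
      · apply Ideal.Quotient.algHom_ext
        apply Polynomial.algHom_ext
        simp [phi2, psi2, psil, psir, phi0]
        exact (congrArg _ ((Ideal.Quotient.lift_mk _ _ _).trans (Polynomial.aeval_X _))).trans ((Ideal.Quotient.lift_mk _ _ _).trans (aeval_X _ _))
  · apply Ideal.Quotient.algHom_ext
    apply MvPolynomial.algHom_ext
    intro i
    fin_cases i <;> simp [phi2, psi2, psil, psir, phi0]
    all_goals refine (congrArg _ ((Ideal.Quotient.lift_mk _ _ _).trans (aeval_X _ _))).trans ?_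
    all_goals simp [Ideal.Quotient.liftₐ_apply]
    all_goals exact (Ideal.Quotient.lift_mk _ _ _).trans (Polynomial.aeval_X _)

noncomputable abbrev JCW : Ideal (MvPolynomial (Fin 2) ℂ) :=
  Ideal.span ({X 0 ^ 2 - X 1 ^ 2, X 0 * X 1, X 0 ^ 3} : Set (MvPolynomial (Fin 2) ℂ))

noncomputable def Fcw : MvPolynomial (Fin 2) ℂ →ₐ[ℂ] MvPolynomial (Fin 2) ℂ :=
  aeval ![X 0 + X 1, C Complex.I * (X 0 - X 1)]

noncomputable def Gcw : MvPolynomial (Fin 2) ℂ →ₐ[ℂ] MvPolynomial (Fin 2) ℂ :=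
  aeval ![C (1/2 : ℂ) * (X 0 - C Complex.I * X 1), C (1/2 : ℂ) * (X 0 + C Complex.I * X 1)]

lemma hc_sq : (C Complex.I : MvPolynomial (Fin 2) ℂ) ^ 2 = -1 := by
  rw [← C_pow, Complex.I_sq]
  simp

noncomputable def phi3 : CW2Algebra →ₐ[ℂ] Q2 :=
  Ideal.Quotient.liftₐ JCW ((Ideal.Quotient.mkₐ ℂ I2).comp Fcw) (by
    have hle : JCW ≤ RingHom.ker ((Ideal.Quotient.mkₐ ℂ I2).comp Fcw).toRingHom := by
      rw [Ideal.span_le]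
      have h0 : (X 0 ^ 2 : MvPolynomial (Fin 2) ℂ) ∈ I2 := Ideal.subset_span (Set.mem_insert _ _)
      have h1 : (X 1 ^ 2 : MvPolynomial (Fin 2) ℂ) ∈ I2 :=
        Ideal.subset_span (Set.mem_insert_iff.mpr (Or.inr rfl))
      have hred : ∀ g : MvPolynomial (Fin 2) ℂ, Fcw g ∈ I2 →
          g ∈ (RingHom.ker ((Ideal.Quotient.mkₐ ℂ I2).comp Fcw).toRingHom : Set _) := by
        intro g hg
        simpa only [SetLike.mem_coe, RingHom.mem_ker, AlgHom.toRingHom_eq_coe, RingHom.coe_coe,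
          AlgHom.comp_apply, Ideal.Quotient.mkₐ_eq_mk, Ideal.Quotient.eq_zero_iff_mem] using hg
      rintro g (rfl | rfl | rfl) <;> apply hred <;>
        simp only [Fcw, map_sub, map_mul, map_pow, aeval_X, aeval_C,
          Matrix.cons_val_zero, Matrix.cons_val_one, Matrix.head_cons, algHom_C]
      · have key : ((X 0 + X 1 : MvPolynomial (Fin 2) ℂ)) ^ 2 - (C Complex.I * (X 0 - X 1)) ^ 2
            = 2 * X 0 ^ 2 + 2 * X 1 ^ 2 := by
          linear_combination (-(X 0 - X 1 : MvPolynomial (Fin 2) ℂ) ^ 2) * hc_sq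
        rw [key]
        exact Ideal.add_mem _ (Ideal.mul_mem_left _ _ h0) (Ideal.mul_mem_left _ _ h1)
      · have key : ((X 0 + X 1 : MvPolynomial (Fin 2) ℂ)) * (C Complex.I * (X 0 - X 1))
            = C Complex.I * X 0 ^ 2 + (-(C Complex.I)) * X 1 ^ 2 := by ring
        rw [key]
        exact Ideal.add_mem _ (Ideal.mul_mem_left _ _ h0) (Ideal.mul_mem_left _ _ h1)
      · have key : ((X 0 + X 1 : MvPolynomial (Fin 2) ℂ)) ^ 3
            = (X 0 + 3 * X 1) * X 0 ^ 2 + (3 * X 0 + X 1) * X 1 ^ 2 := by ring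
        rw [key]
        exact Ideal.add_mem _ (Ideal.mul_mem_left _ _ h0) (Ideal.mul_mem_left _ _ h1)
    intro a ha
    exact RingHom.mem_ker.mp (hle ha))

noncomputable def psi3 : Q2 →ₐ[ℂ] CW2Algebra :=
  Ideal.Quotient.liftₐ I2 ((Ideal.Quotient.mkₐ ℂ JCW).comp Gcw) (by
    have g1 : (X 0 ^ 2 - X 1 ^ 2 : MvPolynomial (Fin 2) ℂ) ∈ JCW :=
      Ideal.subset_span (Set.mem_insert _ _)
    have g2 : (X 0 * X 1 : MvPolynomial (Fin 2) ℂ) ∈ JCW :=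
      Ideal.subset_span (Set.mem_insert_iff.mpr (Or.inr (Set.mem_insert _ _)))
    have hle : I2 ≤ RingHom.ker ((Ideal.Quotient.mkₐ ℂ JCW).comp Gcw).toRingHom := by
      rw [Ideal.span_le]
      have hred : ∀ g : MvPolynomial (Fin 2) ℂ, Gcw g ∈ JCW →
          g ∈ (RingHom.ker ((Ideal.Quotient.mkₐ ℂ JCW).comp Gcw).toRingHom : Set _) := by
        intro g hg
        simpa only [SetLike.mem_coe, RingHom.mem_ker, AlgHom.toRingHom_eq_coe, RingHom.coe_coe,
          AlgHom.comp_apply, Ideal.Quotient.mkₐ_eq_mk, Ideal.Quotient.eq_zero_iff_mem] using hg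
      rintro g (rfl | rfl) <;> apply hred <;>
        simp only [Gcw, map_sub, map_add, map_mul, map_pow, aeval_X, aeval_C,
          Matrix.cons_val_zero, Matrix.cons_val_one, Matrix.head_cons, algHom_C]
      · have key : (C (1/2 : ℂ) * (X 0 - C Complex.I * X 1)) ^ 2
            = (C (1/2 : ℂ) * C (1/2 : ℂ)) * (X 0 ^ 2 - X 1 ^ 2)
              + (-(2 : MvPolynomial (Fin 2) ℂ) * C (1/2 : ℂ) * C (1/2 : ℂ) * C Complex.I) * (X 0 * X 1) := by
          linear_combination ((C (1/2:ℂ) * C (1/2:ℂ)) * (X 1 : MvPolynomial (Fin 2) ℂ) ^ 2) * hc_sq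
        rw [key]
        exact Ideal.add_mem _ (Ideal.mul_mem_left _ _ g1) (Ideal.mul_mem_left _ _ g2)
      · have key : (C (1/2 : ℂ) * (X 0 + C Complex.I * X 1)) ^ 2
            = (C (1/2 : ℂ) * C (1/2 : ℂ)) * (X 0 ^ 2 - X 1 ^ 2)
              + ((2 : MvPolynomial (Fin 2) ℂ) * C (1/2 : ℂ) * C (1/2 : ℂ) * C Complex.I) * (X 0 * X 1) := by
          linear_combination ((C (1/2:ℂ) * C (1/2:ℂ)) * (X 1 : MvPolynomial (Fin 2) ℂ) ^ 2) * hc_sq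
        rw [key]
        exact Ideal.add_mem _ (Ideal.mul_mem_left _ _ g1) (Ideal.mul_mem_left _ _ g2)
    intro a ha
    exact RingHom.mem_ker.mp (hle ha))

lemma phi3_mk (p : MvPolynomial (Fin 2) ℂ) :
    phi3 (Ideal.Quotient.mk JCW p) = Ideal.Quotient.mk I2 (Fcw p) := by
  simp [phi3, Ideal.Quotient.liftₐ_apply]
  exact Ideal.Quotient.lift_mk _ _ _

lemma psi3_mk (p : MvPolynomial (Fin 2) ℂ) :
    psi3 (Ideal.Quotient.mk I2 p) = Ideal.Quotient.mk JCW (Gcw p) := by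
  simp [psi3, Ideal.Quotient.liftₐ_apply]
  exact Ideal.Quotient.lift_mk _ _ _

lemma hhalf : (C (1/2 : ℂ) : MvPolynomial (Fin 2) ℂ) * 2 = 1 := by
  rw [show (2 : MvPolynomial (Fin 2) ℂ) = C (2 : ℂ) from (map_ofNat C 2).symm, ← C_mul, ← C_1]
  norm_num

lemma FG0 : Fcw (Gcw (X 0)) = (X 0 : MvPolynomial (Fin 2) ℂ) := by
  simp only [Fcw, Gcw, map_sub, map_add, map_mul, aeval_X, algHom_C,
    Matrix.cons_val_zero, Matrix.cons_val_one, Matrix.head_cons, MvPolynomial.algebraMap_eq]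
  linear_combination (-(C (1/2:ℂ)) * (X 0 - X 1 : MvPolynomial (Fin 2) ℂ)) * hc_sq + (X 0 : MvPolynomial (Fin 2) ℂ) * hhalf

lemma FG1 : Fcw (Gcw (X 1)) = (X 1 : MvPolynomial (Fin 2) ℂ) := by
  simp only [Fcw, Gcw, map_sub, map_add, map_mul, aeval_X, algHom_C,
    Matrix.cons_val_zero, Matrix.cons_val_one, Matrix.head_cons, MvPolynomial.algebraMap_eq]
  linear_combination ((C (1/2:ℂ)) * (X 0 - X 1 : MvPolynomial (Fin 2) ℂ)) * hc_sq + (X 1 : MvPolynomial (Fin 2) ℂ) * hhalf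

lemma GF0 : Gcw (Fcw (X 0)) = (X 0 : MvPolynomial (Fin 2) ℂ) := by
  simp only [Fcw, Gcw, map_sub, map_add, map_mul, aeval_X, algHom_C,
    Matrix.cons_val_zero, Matrix.cons_val_one, Matrix.head_cons, MvPolynomial.algebraMap_eq]
  linear_combination (X 0 : MvPolynomial (Fin 2) ℂ) * hhalf

lemma GF1 : Gcw (Fcw (X 1)) = (X 1 : MvPolynomial (Fin 2) ℂ) := by
  simp only [Fcw, Gcw, map_sub, map_add, map_mul, aeval_X, algHom_C,
    Matrix.cons_val_zero, Matrix.cons_val_one, Matrix.head_cons, MvPolynomial.algebraMap_eq]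
  linear_combination (-2*(C (1/2:ℂ)) * (X 1 : MvPolynomial (Fin 2) ℂ)) * hc_sq + (X 1 : MvPolynomial (Fin 2) ℂ) * hhalf

noncomputable def iso3 : CW2Algebra ≃ₐ[ℂ] Q2 := by
  refine AlgEquiv.ofAlgHom phi3 psi3 ?_ ?_
  · apply Ideal.Quotient.algHom_ext
    apply MvPolynomial.algHom_ext
    intro i
    simp only [AlgHom.comp_apply, Ideal.Quotient.mkₐ_eq_mk, AlgHom.id_apply]
    rw [psi3_mk, phi3_mk]
    fin_cases i
    · rw [show ((⟨0, by norm_num⟩ : Fin 2)) = 0 from rfl, FG0]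
    · rw [show ((⟨1, by norm_num⟩ : Fin 2)) = 1 from rfl, FG1]
  · apply Ideal.Quotient.algHom_ext
    apply MvPolynomial.algHom_ext
    intro i
    simp only [AlgHom.comp_apply, Ideal.Quotient.mkₐ_eq_mk, AlgHom.id_apply]
    rw [phi3_mk, psi3_mk]
    fin_cases i
    · rw [show ((⟨0, by norm_num⟩ : Fin 2)) = 0 from rfl, GF0]
    · rw [show ((⟨1, by norm_num⟩ : Fin 2)) = 1 from rfl, GF1]

noncomputable def iso1 : apolarAlgebra (X 0 * X 1 : MvPolynomial (Fin 2) ℂ) ≃ₐ[ℂ] Q2 :=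
  Ideal.quotientEquivAlgOfEq ℂ apolar_eq

theorem stmt15 :
    Nonempty (apolarAlgebra (X 0 * X 1 : MvPolynomial (Fin 2) ℂ)
      ≃ₐ[ℂ] (MvPolynomial (Fin 2) ℂ ⧸
        Ideal.span ({X 0 ^ 2, X 1 ^ 2} : Set (MvPolynomial (Fin 2) ℂ)))) ∧
    Nonempty ((MvPolynomial (Fin 2) ℂ ⧸
        Ideal.span ({X 0 ^ 2, X 1 ^ 2} : Set (MvPolynomial (Fin 2) ℂ)))
      ≃ₐ[ℂ] TensorProduct ℂ dualNumbers dualNumbers) ∧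
    Nonempty (apolarAlgebra (X 0 * X 1 : MvPolynomial (Fin 2) ℂ)
      ≃ₐ[ℂ] CW2Algebra) :=
  ⟨⟨iso1⟩, ⟨iso2⟩, ⟨iso1.trans iso3.symm⟩⟩
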